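/- Let C be an N×M and D an M×N matrix with nonnegative integer entries, and set A = CD, B = DC. Realize the edge sets E_A and E_B as pairs from E_C and E_D. Define ζ : X_A → X_B by ζ((c_n, d_n)_{n∈ℕ}) = ((d_n, c_{n+1}))_{n∈ℕ} and η : X_B → X_A by η((d_n, c_n)_{n∈ℕ}) = ((c_n, d_{n+1}))_{n∈ℕ}. Then ζ and η are well-defined continuous maps satisfying η ∘ ζ = σ_A, ζ ∘ η = σ_B, ζ ∘ σ_A = σ_B ∘ ζ, and η ∘ σ_B = σ_A ∘ η. -/

import Mathlib

open Matrix

/-- The edge set of the directed graph of a rectangular matrix `C` with nonnegative integer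
entries: there are `C i j` edges from vertex `i` to vertex `j`. -/
def Edge {N M : ℕ} (C : Matrix (Fin N) (Fin M) ℕ) : Type :=
  Σ i : Fin N, Σ j : Fin M, Fin (C i j)

instance {N M : ℕ} (C : Matrix (Fin N) (Fin M) ℕ) : Fintype (Edge C) := by
  unfold Edge
  haveI : ∀ i j, Fintype (Fin (C i j)) := fun i j => Fin.fintype (C i j)
  infer_instance

instance {N M : ℕ} (C : Matrix (Fin N) (Fin M) ℕ) : DecidableEq (Edge C) := by
  unfold Edge; infer_instance

/-- The source vertex of an edge. -/
def Edge.src {N M : ℕ} {C : Matrix (Fin N) (Fin M) ℕ} (e : Edge C) : Fin N := e.1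

/-- The target vertex of an edge. -/
def Edge.tar {N M : ℕ} {C : Matrix (Fin N) (Fin M) ℕ} (e : Edge C) : Fin M := e.2.1

/-- The edge set of `A = CD`, realized as composable pairs `(c, d)` of edges of `C` and `D`. -/
def PairEdgeA {N M : ℕ} (C : Matrix (Fin N) (Fin M) ℕ) (D : Matrix (Fin M) (Fin N) ℕ) :
    Type :=
  {p : Edge C × Edge D // p.1.tar = p.2.src}

/-- The edge set of `B = DC`, realized as composable pairs `(d, c)` of edges of `D` and `C`. -/
def PairEdgeB {N M : ℕ} (C : Matrix (Fin N) (Fin M) ℕ) (D : Matrix (Fin M) (Fin N) ℕ) :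
    Type :=
  {p : Edge D × Edge C // p.1.tar = p.2.src}

instance {N M : ℕ} (C : Matrix (Fin N) (Fin M) ℕ) (D : Matrix (Fin M) (Fin N) ℕ) :
    Fintype (PairEdgeA C D) := by unfold PairEdgeA; infer_instance

instance {N M : ℕ} (C : Matrix (Fin N) (Fin M) ℕ) (D : Matrix (Fin M) (Fin N) ℕ) :
    Fintype (PairEdgeB C D) := by unfold PairEdgeB; infer_instance

instance {N M : ℕ} (C : Matrix (Fin N) (Fin M) ℕ) (D : Matrix (Fin M) (Fin N) ℕ) :
    DecidableEq (PairEdgeA C D) := by unfold PairEdgeA; infer_instance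

instance {N M : ℕ} (C : Matrix (Fin N) (Fin M) ℕ) (D : Matrix (Fin M) (Fin N) ℕ) :
    DecidableEq (PairEdgeB C D) := by unfold PairEdgeB; infer_instance

instance {N M : ℕ} (C : Matrix (Fin N) (Fin M) ℕ) (D : Matrix (Fin M) (Fin N) ℕ) :
    TopologicalSpace (PairEdgeA C D) := ⊥

instance {N M : ℕ} (C : Matrix (Fin N) (Fin M) ℕ) (D : Matrix (Fin M) (Fin N) ℕ) :
    DiscreteTopology (PairEdgeA C D) := ⟨rfl⟩

instance {N M : ℕ} (C : Matrix (Fin N) (Fin M) ℕ) (D : Matrix (Fin M) (Fin N) ℕ) :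
    TopologicalSpace (PairEdgeB C D) := ⊥

instance {N M : ℕ} (C : Matrix (Fin N) (Fin M) ℕ) (D : Matrix (Fin M) (Fin N) ℕ) :
    DiscreteTopology (PairEdgeB C D) := ⟨rfl⟩

/-- The one-sided topological Markov shift space `X_A` for `A = CD`, realized on the pair
edge set `E_A`, with the topology induced from the product topology. -/
abbrev XA {N M : ℕ} (C : Matrix (Fin N) (Fin M) ℕ) (D : Matrix (Fin M) (Fin N) ℕ) : Type :=
  {x : ℕ → PairEdgeA C D // ∀ n, (x n).val.2.tar = (x (n + 1)).val.1.src}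

/-- The one-sided topological Markov shift space `X_B` for `B = DC`, realized on the pair
edge set `E_B`, with the topology induced from the product topology. -/
abbrev XB {N M : ℕ} (C : Matrix (Fin N) (Fin M) ℕ) (D : Matrix (Fin M) (Fin N) ℕ) : Type :=
  {y : ℕ → PairEdgeB C D // ∀ n, (y n).val.2.tar = (y (n + 1)).val.1.src}

/-- The shift map `σ_A` on `X_A`. -/
def shiftA {N M : ℕ} (C : Matrix (Fin N) (Fin M) ℕ) (D : Matrix (Fin M) (Fin N) ℕ)
    (x : XA C D) : XA C D :=
  ⟨fun n => x.val (n + 1), fun n => x.prop (n + 1)⟩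

/-- The shift map `σ_B` on `X_B`. -/
def shiftB {N M : ℕ} (C : Matrix (Fin N) (Fin M) ℕ) (D : Matrix (Fin M) (Fin N) ℕ)
    (y : XB C D) : XB C D :=
  ⟨fun n => y.val (n + 1), fun n => y.prop (n + 1)⟩

def zetaMap {N M : ℕ} {C : Matrix (Fin N) (Fin M) ℕ} {D : Matrix (Fin M) (Fin N) ℕ}
    (x : XA C D) : XB C D :=
  ⟨fun n => ⟨((x.val n).val.2, (x.val (n+1)).val.1), x.prop n⟩,
    fun n => (x.val (n+1)).prop⟩

def etaMap {N M : ℕ} {C : Matrix (Fin N) (Fin M) ℕ} {D : Matrix (Fin M) (Fin N) ℕ}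
    (y : XB C D) : XA C D :=
  ⟨fun n => ⟨((y.val n).val.2, (y.val (n+1)).val.1), y.prop n⟩,
    fun n => (y.val (n+1)).prop⟩

theorem cont_of_factor {X Z Y : Type*} [TopologicalSpace X] [TopologicalSpace Z]
    [DiscreteTopology Z] [TopologicalSpace Y] (e : X → Z) (he : Continuous e)
    (f : X → Y) (hf : ∀ a b, e a = e b → f a = f b) : Continuous f := by
  refine continuous_def.mpr fun s _ => ?_
  have heq : f ⁻¹' s = e ⁻¹' (e '' (f ⁻¹' s)) := by
    apply subset_antisymm (Set.subset_preimage_image _ _)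
    rintro x ⟨a, ha, hea⟩
    have : f x = f a := hf x a hea.symm
    simpa [Set.mem_preimage, this] using ha
  rw [heq]
  exact (isOpen_discrete _).preimage he

theorem zetaMap_continuous {N M : ℕ} {C : Matrix (Fin N) (Fin M) ℕ}
    {D : Matrix (Fin M) (Fin N) ℕ} :
    Continuous (zetaMap (C := C) (D := D)) := by
  have hv : Continuous fun x : XA C D => (zetaMap x).val := by
    apply continuous_pi
    intro n
    apply cont_of_factor (fun x : XA C D => (x.val n, x.val (n+1)))
      (((continuous_apply n).comp continuous_subtype_val).prodMk
        ((continuous_apply (n+1)).comp continuous_subtype_val))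
    intro a b h
    have h1 : a.val n = b.val n := congrArg Prod.fst h
    have h2 : a.val (n+1) = b.val (n+1) := congrArg Prod.snd h
    apply Subtype.ext
    show ((a.val n).val.2, (a.val (n+1)).val.1) = ((b.val n).val.2, (b.val (n+1)).val.1)
    rw [h1, h2]
  exact hv.subtype_mk _

theorem etaMap_continuous {N M : ℕ} {C : Matrix (Fin N) (Fin M) ℕ}
    {D : Matrix (Fin M) (Fin N) ℕ} :
    Continuous (etaMap (C := C) (D := D)) := by
  have hv : Continuous fun x : XB C D => (etaMap x).val := by
    apply continuous_pi
    intro n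
    apply cont_of_factor (fun x : XB C D => (x.val n, x.val (n+1)))
      (((continuous_apply n).comp continuous_subtype_val).prodMk
        ((continuous_apply (n+1)).comp continuous_subtype_val))
    intro a b h
    have h1 : a.val n = b.val n := congrArg Prod.fst h
    have h2 : a.val (n+1) = b.val (n+1) := congrArg Prod.snd h
    apply Subtype.ext
    show ((a.val n).val.2, (a.val (n+1)).val.1) = ((b.val n).val.2, (b.val (n+1)).val.1)
    rw [h1, h2]
  exact hv.subtype_mk _

/-- Let `C`, `D` be rectangular nonnegative integer matrices, `A = CD`,
`B = DC`.  The maps `ζ : X_A → X_B`, `ζ((c_n,d_n)_n) = ((d_n,c_{n+1}))_n`, and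
`η : X_B → X_A`, `η((d_n,c_n)_n) = ((c_n,d_{n+1}))_n`, are well-defined continuous maps
satisfying `η ∘ ζ = σ_A`, `ζ ∘ η = σ_B`, `ζ ∘ σ_A = σ_B ∘ ζ` and `η ∘ σ_B = σ_A ∘ η`. -/
theorem stmt_11 (N M : ℕ) (C : Matrix (Fin N) (Fin M) ℕ) (D : Matrix (Fin M) (Fin N) ℕ) :
    ∃ (ζ : XA C D → XB C D) (η : XB C D → XA C D),
      Continuous ζ ∧ Continuous η ∧
      (∀ (x : XA C D) (n : ℕ),
        ((ζ x).val n).val.1 = (x.val n).val.2 ∧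
        ((ζ x).val n).val.2 = (x.val (n + 1)).val.1) ∧
      (∀ (y : XB C D) (n : ℕ),
        ((η y).val n).val.1 = (y.val n).val.2 ∧
        ((η y).val n).val.2 = (y.val (n + 1)).val.1) ∧
      (∀ x, η (ζ x) = shiftA C D x) ∧
      (∀ y, ζ (η y) = shiftB C D y) ∧
      (∀ x, ζ (shiftA C D x) = shiftB C D (ζ x)) ∧
      (∀ y, η (shiftB C D y) = shiftA C D (η y)) := by
  refine ⟨zetaMap, etaMap, zetaMap_continuous, etaMap_continuous,
    fun x n => ⟨rfl, rfl⟩, fun y n => ⟨rfl, rfl⟩, ?_, ?_, ?_, ?_⟩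
  · intro x
    apply Subtype.ext; funext n
    apply Subtype.ext
    exact Prod.ext rfl rfl
  · intro y
    apply Subtype.ext; funext n
    apply Subtype.ext
    exact Prod.ext rfl rfl
  · intro x; rfl
  · intro y; rfl
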